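/- Let Γ be a group and let Γ₁ ≤ Γ₀ ≤ Γ be subgroups. Then the following two conditions are equivalent. (A) For every finite list of elements x₁, …, x_m ∈ Γ, if Γ₁ ⊆ ⋃_{i,j=1}^m x_i Γ₀ x_j (as subsets of Γ), then x_i ∈ Γ₀ for some i. (B) For every finite lists x₁, …, x_n ∈ Γ and y₁, …, y_n ∈ Γ with x_i ∉ Γ₀ and y_j ∉ Γ₀ for all i, j, there exists γ₀ ∈ Γ₁ such that x_i γ₀ y_j ∉ Γ₀ for all 1 ≤ i, j ≤ n. -/
import Mathlib


/-- Lemma 3.4 (group-theoretic reduction): for subgroups `Γ₁ ≤ Γ₀ ≤ Γ`, the condition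
"whenever `Γ₁ ⊆ ⋃_{i,j} xᵢ Γ₀ xⱼ`, some `xᵢ ∈ Γ₀`" is equivalent to the condition
"for finite lists of elements outside `Γ₀` there is `γ₀ ∈ Γ₁` with all `xᵢ γ₀ yⱼ ∉ Γ₀`". -/
theorem stmt0 {Γ : Type*} [Group Γ] (Γ₀ Γ₁ : Subgroup Γ) (hle : Γ₁ ≤ Γ₀) :
    (∀ (m : ℕ) (x : Fin m → Γ),
        (Γ₁ : Set Γ) ⊆ ⋃ (i : Fin m) (j : Fin m),
          (fun g => x i * g * x j) '' (Γ₀ : Set Γ) →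
        ∃ i, x i ∈ Γ₀) ↔
    (∀ (n : ℕ) (x y : Fin n → Γ), (∀ i, x i ∉ Γ₀) → (∀ j, y j ∉ Γ₀) →
        ∃ γ₀ ∈ Γ₁, ∀ i j, x i * γ₀ * y j ∉ Γ₀) := by
  constructor
  · intro hA n x y hx hy
    by_contra hc
    push_neg at hc
    set z : Fin (n + n) → Γ :=
      Fin.addCases (fun i => (x i)⁻¹) (fun j => (y j)⁻¹) with hz
    have hsub : (Γ₁ : Set Γ) ⊆ ⋃ (i : Fin (n + n)) (j : Fin (n + n)),
        (fun g => z i * g * z j) '' (Γ₀ : Set Γ) := by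
      intro γ hγ
      obtain ⟨i, j, hij⟩ := hc γ hγ
      refine Set.mem_iUnion.mpr ⟨Fin.castAdd n i, Set.mem_iUnion.mpr
        ⟨Fin.natAdd n j, ⟨x i * γ * y j, hij, ?_⟩⟩⟩
      simp only [hz, Fin.addCases_left, Fin.addCases_right]
      group
    obtain ⟨k, hk⟩ := hA (n + n) z hsub
    have hzk : ∀ k, z k ∉ Γ₀ := by
      refine Fin.addCases (fun i => ?_) (fun j => ?_)
      · simp only [hz, Fin.addCases_left]
        exact fun h => hx i ((Subgroup.inv_mem_iff Γ₀).mp h)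
      · simp only [hz, Fin.addCases_right]
        exact fun h => hy j ((Subgroup.inv_mem_iff Γ₀).mp h)
    exact hzk k hk
  · intro hB m x hsub
    by_contra hc
    push_neg at hc
    obtain ⟨γ₀, hγ₀, hall⟩ := hB m (fun i => (x i)⁻¹) (fun j => (x j)⁻¹)
      (fun i h => hc i ((Subgroup.inv_mem_iff Γ₀).mp h))
      (fun j h => hc j ((Subgroup.inv_mem_iff Γ₀).mp h))
    obtain ⟨i, j, g, hg, hgeq⟩ := by
      have := hsub hγ₀
      simp only [Set.mem_iUnion, Set.mem_image] at this
      exact this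
    refine hall i j ?_
    have : (x i)⁻¹ * γ₀ * (x j)⁻¹ = g := by
      rw [← hgeq]; group
    rw [this]; exact hg
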